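/- Let f ∈ F_q[x] be a monic irreducible polynomial of degree d, K = F_q[x]/⟨f⟩, and ρ: K → F_q^{d×d} the regular matrix representation of K with respect to the basis {1, x, ..., x^{d-1}}. Then there exists a symmetric nonsingular matrix P ∈ F_q^{d×d} such that P^{-1} ρ(v) P = ρ(v)^T for all v ∈ F_q^d (identifying v ∈ F_q^d with Σ_{i=0}^{d-1} v_i x^i ∈ K). -/

import Mathlib

open Matrix Polynomial

/-- `p` annihilates the matrix sequence `S`, i.e. `p(S) = 0`:
for every `k`, `∑ i, (coeff p i) • S (i + k) = 0`. -/
def AnnPoly {F : Type} [Field F] {α β : Type} (p : Polynomial F)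
    (S : ℕ → Matrix α β F) : Prop :=
  ∀ k : ℕ, (p.sum fun i a => a • S (i + k)) = 0

open scoped Classical in
/-- The minimal generating polynomial of a matrix sequence: the unique monic
polynomial annihilating `S` that divides every annihilator of `S`
(`0` if no such polynomial exists). -/
noncomputable def seqMinpoly {F : Type} [Field F] {α β : Type}
    (S : ℕ → Matrix α β F) : Polynomial F :=
  if h : ∃ p : Polynomial F, p.Monic ∧ AnnPoly p S ∧ ∀ g : Polynomial F, AnnPoly g S → p ∣ g
  then h.choose else 0

/-- Identify `v ∈ F^d` with the element `∑ᵢ vᵢ xⁱ` of `K = F[x]/⟨f⟩`. -/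
noncomputable def toExt {F : Type} [Field F] {d : ℕ} (f : Polynomial F)
    (v : Fin d → F) : AdjoinRoot f :=
  ∑ i : Fin d, v i • AdjoinRoot.root f ^ (i : ℕ)

/-- If `ρ` is the regular matrix representation of `K = F_q[x]/⟨f⟩` with respect to the
basis `{1, x, …, x^{d-1}}` (i.e. `ρ(w)u = w·u` in `K`), then there is a symmetric
nonsingular `P` with `P⁻¹ ρ(v) P = ρ(v)ᵀ` for all `v ∈ F_q^d`. -/
theorem stmt10 (F : Type) [Field F] [Fintype F]
    (f : Polynomial F) (hmonic : f.Monic) (hirr : Irreducible f)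
    (d : ℕ) (hd : d = f.natDegree)
    (rho : (Fin d → F) → Matrix (Fin d) (Fin d) F)
    (hrho : ∀ w u : Fin d → F,
      toExt f ((rho w).mulVec u) = toExt f w * toExt f u) :
    ∃ P : Matrix (Fin d) (Fin d) F, P.IsSymm ∧ IsUnit P ∧
      ∀ v : Fin d → F, P⁻¹ * rho v * P = (rho v)ᵀ := by

  subst hd
  have hf0 : f ≠ 0 := hirr.ne_zero
  have hpos : 0 < f.natDegree := hirr.natDegree_pos
  haveI : Fact (Irreducible f) := ⟨hirr⟩
  set b : Module.Basis (Fin f.natDegree) F (AdjoinRoot f) :=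
    (AdjoinRoot.powerBasis hf0).basis with hbdef
  have hb : ∀ i : Fin f.natDegree, b i = AdjoinRoot.root f ^ (i : ℕ) := by
    intro i
    have := (AdjoinRoot.powerBasis hf0).basis_eq_pow i; rw [AdjoinRoot.powerBasis_gen] at this; exact this
  have htoExt : ∀ v : Fin f.natDegree → F, toExt f v = b.equivFun.symm v := by
    intro v
    rw [Module.Basis.equivFun_symm_apply, toExt]
    exact Finset.sum_congr rfl fun i _ => by rw [hb]
  have htoExt_inj : Function.Injective (toExt f (d := f.natDegree)) := by
    intro u v huv
    rw [htoExt, htoExt] at huv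
    exact b.equivFun.symm.injective huv
  -- the linear functional: coordinate at index d-1
  set lam : AdjoinRoot f →ₗ[F] F := b.coord ⟨f.natDegree - 1, Nat.sub_lt hpos one_pos⟩
    with hlam
  have hlam_top : lam (AdjoinRoot.root f ^ (f.natDegree - 1)) = 1 := by
    have := b.repr_self ⟨f.natDegree - 1, Nat.sub_lt hpos one_pos⟩
    rw [hlam]
    simp only [Module.Basis.coord_apply]
    rw [← hb ⟨f.natDegree - 1, Nat.sub_lt hpos one_pos⟩, this]
    simp
  -- nondegeneracy of (a, z) ↦ lam (a * z)
  have hnondeg : ∀ z : AdjoinRoot f, (∀ j : Fin f.natDegree,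
      lam (z * AdjoinRoot.root f ^ (j : ℕ)) = 0) → z = 0 := by
    intro z hz
    by_contra hz0
    have hall : ∀ w : AdjoinRoot f, lam (z * w) = 0 := by
      intro w
      have := b.sum_repr w
      calc lam (z * w) = lam (z * ∑ i, b.repr w i • b i) := by rw [this]
        _ = ∑ i, b.repr w i * lam (z * AdjoinRoot.root f ^ (i : ℕ)) := by
            rw [Finset.mul_sum, map_sum]
            exact Finset.sum_congr rfl fun i _ => by
              rw [hb, mul_smul_comm, lam.map_smul]; rfl
        _ = 0 := by simp [hz]
    have h1 : lam (z * (z⁻¹ * AdjoinRoot.root f ^ (f.natDegree - 1))) = 0 := hall _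
    rw [← mul_assoc, mul_inv_cancel₀ hz0, one_mul, hlam_top] at h1
    exact one_ne_zero h1
  have hsingle : ∀ j : Fin f.natDegree,
      toExt f (Pi.single j (1 : F)) = AdjoinRoot.root f ^ (j : ℕ) := by
    intro j
    rw [toExt]
    rw [Finset.sum_eq_single j]
    · simp
    · intro i _ hij; simp [Pi.single_apply, hij]
    · simp
  -- columns of rho v
  have hcol : ∀ (v : Fin f.natDegree → F) (j : Fin f.natDegree),
      toExt f (fun k => rho v k j) = toExt f v * AdjoinRoot.root f ^ (j : ℕ) := by
    intro v j
    have : (fun k => rho v k j) = (rho v).mulVec (Pi.single j 1) := by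
      funext k
      simp [Matrix.mulVec, dotProduct, Pi.single_apply]
    rw [this, hrho, hsingle]
  -- lam of root^i * toExt u expands as a sum
  have hexp : ∀ (i : Fin f.natDegree) (u : Fin f.natDegree → F),
      lam (AdjoinRoot.root f ^ (i : ℕ) * toExt f u)
        = ∑ k : Fin f.natDegree, u k * lam (AdjoinRoot.root f ^ ((i : ℕ) + (k : ℕ))) := by
    intro i u
    rw [toExt, Finset.mul_sum, map_sum]
    exact Finset.sum_congr rfl fun k _ => by
      rw [mul_smul_comm, ← pow_add, lam.map_smul]; rfl
  -- the matrix P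
  set P : Matrix (Fin f.natDegree) (Fin f.natDegree) F :=
    Matrix.of fun i j => lam (AdjoinRoot.root f ^ ((i : ℕ) + (j : ℕ))) with hP
  have hPsymm : P.IsSymm := by
    ext i j
    simp [hP, Nat.add_comm]
  have hmul : ∀ v : Fin f.natDegree → F, P * rho v = (rho v)ᵀ * P := by
    intro v
    ext i j
    have h1 : (P * rho v) i j
        = lam (AdjoinRoot.root f ^ (i : ℕ) * (toExt f v * AdjoinRoot.root f ^ (j : ℕ))) := by
      rw [← hcol v j, hexp]
      rw [Matrix.mul_apply]
      exact Finset.sum_congr rfl fun k _ => by rw [mul_comm]; rfl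
    have h2 : ((rho v)ᵀ * P) i j
        = lam (AdjoinRoot.root f ^ (j : ℕ) * (toExt f v * AdjoinRoot.root f ^ (i : ℕ))) := by
      rw [← hcol v i, hexp]
      rw [Matrix.mul_apply]
      refine Finset.sum_congr rfl fun k _ => ?_
      simp [hP, Matrix.transpose_apply, Nat.add_comm]
    rw [h1, h2]
    ring_nf
  have hPunit : IsUnit P := by
    rw [← Matrix.mulVec_injective_iff_isUnit]
    rw [Function.Injective]
    suffices h : ∀ u : Fin f.natDegree → F, P.mulVec u = 0 → u = 0 by
      intro a b hab
      have : P.mulVec (a - b) = 0 := by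
        rw [Matrix.mulVec_sub, hab, sub_self]
      have := h _ this
      exact sub_eq_zero.mp this
    intro u hu
    have hz : ∀ j : Fin f.natDegree,
        lam (toExt f u * AdjoinRoot.root f ^ (j : ℕ)) = 0 := by
      intro j
      have := congrFun hu j
      rw [Matrix.mulVec, dotProduct] at this
      rw [mul_comm, hexp]
      calc ∑ k, u k * lam (AdjoinRoot.root f ^ ((j : ℕ) + (k : ℕ)))
          = ∑ k, P j k * u k := by
            exact Finset.sum_congr rfl fun k _ => by rw [mul_comm]; rfl
        _ = 0 := this
    have := hnondeg _ hz
    have := htoExt_inj (a₁ := u) (a₂ := 0) (by rw [this]; simp [toExt])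
    exact this
  -- conclude with P⁻¹
  refine ⟨P⁻¹, ?_, ?_, ?_⟩
  · rw [Matrix.IsSymm, Matrix.transpose_nonsing_inv, hPsymm.eq]
  · rw [Matrix.isUnit_nonsing_inv_iff]; exact hPunit
  · intro v
    rw [Matrix.nonsing_inv_nonsing_inv _ ((Matrix.isUnit_iff_isUnit_det P).mp hPunit)]
    have h := hmul v
    have hPinv : P * P⁻¹ = 1 := Matrix.mul_nonsing_inv _ ((Matrix.isUnit_iff_isUnit_det P).mp hPunit)
    calc P * rho v * P⁻¹ = (rho v)ᵀ * P * P⁻¹ := by rw [mul_assoc, ← mul_assoc, h]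
      _ = (rho v)ᵀ := by rw [mul_assoc, hPinv, mul_one]
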